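/- Let H' be a Hilbert space and δ > 0. For f : ℝ → H' with ∫_ℝ ⟨f(s), e⟩ ds = 0 for all e ∈ H' (i.e., ∫_ℝ f = 0) and f sufficiently decaying, define G f(t) = ∫_{-∞}^t f(s) ds = -∫_t^{+∞} f(s) ds. Then for every integer ℓ ≥ 0 and α > 1, there is a constant C_{α,ℓ} independent of δ and f with ( ∫_ℝ |2πδt|^{2ℓ} ‖G f(t)‖² dt )^{1/2} ≤ (C_{α,ℓ}/δ) · ( ∫_ℝ (1 + 4π²δ²s²)^{ℓ+α} ‖f(s)‖² ds )^{1/2}. -/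

import Mathlib

open MeasureTheory Real SchwartzMap
open scoped ENNReal

set_option maxHeartbeats 1600000

/-- Weighted estimate for the primitive of a zero-mean Schwartz function: for all
`ℓ ∈ ℕ`, `α > 1`, there is `C_{α,ℓ} > 0`, independent of `δ > 0` and `f`, with
`(∫ |2πδt|^{2ℓ} ‖Gf(t)‖² dt)^{1/2} ≤ (C/δ)(∫ (1+4π²δ²s²)^{ℓ+α} ‖f(s)‖² ds)^{1/2}`,
where `Gf(t) = ∫_{-∞}^t f(s) ds`. -/
theorem stmt10 (H' : Type) [NormedAddCommGroup H'] [InnerProductSpace ℝ H']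
    [CompleteSpace H'] :
    ∀ (ℓ : ℕ) (α : ℝ), 1 < α → ∃ C : ℝ, 0 < C ∧
      ∀ δ : ℝ, 0 < δ → ∀ f : SchwartzMap ℝ H', (∫ s : ℝ, f s) = 0 →
        Real.sqrt (∫ t : ℝ, |2 * π * δ * t| ^ (2 * ℓ) * ‖∫ s in Set.Iic t, f s‖ ^ 2) ≤
          (C / δ) * Real.sqrt
            (∫ s : ℝ, (1 + 4 * π ^ 2 * δ ^ 2 * s ^ 2) ^ ((ℓ : ℝ) + α) * ‖f s‖ ^ 2) := by
  intro ℓ α hα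
  have hα1 : (0:ℝ) < α - 1 := by linarith
  refine ⟨Real.sqrt (2 / (α - 1)) / (2 * π), by positivity, ?_⟩
  intro δ hδ f hf
  set u : ℝ := 2 * π * δ with hu_def
  have hu : 0 < u := by positivity
  have hb : ∀ s : ℝ, (0:ℝ) < 1 + u ^ 2 * s ^ 2 := fun s => by positivity
  have hb1 : ∀ s : ℝ, (1:ℝ) ≤ 1 + u ^ 2 * s ^ 2 := fun s =>
    le_add_of_nonneg_right (by positivity)
  set R : ℝ → ℝ := fun s => (1 + u ^ 2 * s ^ 2) ^ ((ℓ:ℝ) + α) * ‖f s‖ ^ 2 with hR_def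
  have h4 : ∀ s : ℝ, 1 + 4 * π ^ 2 * δ ^ 2 * s ^ 2 = 1 + u ^ 2 * s ^ 2 := fun s => by
    rw [hu_def]; ring
  have hcont_base : Continuous fun s : ℝ => 1 + u ^ 2 * s ^ 2 := by continuity
  -- integrability of the right-hand side integrand
  have hRint : Integrable R := by
    set k : ℕ := ℓ + ⌈α⌉₊ with hk_def
    set A : ℝ := max 1 (u ^ 2) with hA_def
    set B : ℝ := (SchwartzMap.seminorm ℝ 0 0) f with hB_def
    have hB : ∀ x : ℝ, ‖f x‖ ≤ B := fun x => f.norm_le_seminorm ℝ x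
    have hB0 : 0 ≤ B := le_trans (norm_nonneg _) (hB 0)
    have hA1 : (1:ℝ) ≤ A := le_max_left _ _
    have hAu : u ^ 2 ≤ A := le_max_right _ _
    have hcontR : Continuous R := by
      refine Continuous.mul ?_ ((f.continuous.norm).pow 2)
      exact hcont_base.rpow_const fun s => Or.inl (hb s).ne'
    have hMint : Integrable (fun s : ℝ =>
        (A ^ k * B * 2 ^ (2 * k)) * (‖f s‖ + ‖s‖ ^ (2 * k) * ‖f s‖)) := by
      exact ((f.integrable.norm).add (f.integrable_pow_mul volume (2 * k))).const_mul _
    refine hMint.mono' hcontR.aestronglyMeasurable (Filter.Eventually.of_forall fun s => ?_)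
    have hRs : ‖R s‖ = R s := abs_of_nonneg (by rw [hR_def]; positivity)
    rw [hRs, hR_def]
    have step1 : (1 + u ^ 2 * s ^ 2) ^ ((ℓ:ℝ) + α) ≤ (1 + u ^ 2 * s ^ 2) ^ k := by
      rw [← Real.rpow_natCast _ k]
      refine Real.rpow_le_rpow_of_exponent_le (hb1 s) ?_
      rw [hk_def]
      push_cast
      exact add_le_add le_rfl (Nat.le_ceil α)
    have step2 : (1 + u ^ 2 * s ^ 2) ^ k ≤ A ^ k * (1 + ‖s‖) ^ (2 * k) := by
      have hrw : A ^ k * (1 + ‖s‖) ^ (2 * k) = (A * (1 + ‖s‖) ^ 2) ^ k := by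
        rw [mul_pow, pow_mul]
      rw [hrw]
      refine pow_le_pow_left₀ (hb s).le ?_ k
      have hs2 : s ^ 2 = ‖s‖ ^ 2 := (sq_abs s).symm
      nlinarith [norm_nonneg s, sq_nonneg (‖s‖ : ℝ)]
    have step3 : (1 + ‖s‖) ^ (2 * k) ≤ 2 ^ (2 * k) * (1 + ‖s‖ ^ (2 * k)) := by
      rcases le_total (‖s‖ : ℝ) 1 with h | h
      · calc (1 + ‖s‖) ^ (2 * k) ≤ 2 ^ (2 * k) :=
            pow_le_pow_left₀ (by positivity) (by linarith) _
          _ ≤ 2 ^ (2 * k) * (1 + ‖s‖ ^ (2 * k)) :=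
            le_mul_of_one_le_right (by positivity)
              (by linarith [pow_nonneg (norm_nonneg s) (2 * k)])
      · calc (1 + ‖s‖) ^ (2 * k) ≤ (2 * ‖s‖) ^ (2 * k) :=
            pow_le_pow_left₀ (by positivity) (by linarith) _
          _ = 2 ^ (2 * k) * ‖s‖ ^ (2 * k) := mul_pow _ _ _
          _ ≤ 2 ^ (2 * k) * (1 + ‖s‖ ^ (2 * k)) := by
            refine mul_le_mul_of_nonneg_left ?_ (by positivity)
            linarith [pow_nonneg (norm_nonneg s) (2 * k)]
    have step4 : ‖f s‖ ^ 2 ≤ B * ‖f s‖ := by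
      rw [sq]
      exact mul_le_mul_of_nonneg_right (hB s) (norm_nonneg _)
    calc (1 + u ^ 2 * s ^ 2) ^ ((ℓ:ℝ) + α) * ‖f s‖ ^ 2
        ≤ (A ^ k * (2 ^ (2 * k) * (1 + ‖s‖ ^ (2 * k)))) * (B * ‖f s‖) := by
          refine mul_le_mul ?_ step4 (by positivity) (by positivity)
          calc (1 + u ^ 2 * s ^ 2) ^ ((ℓ:ℝ) + α)
              ≤ A ^ k * (1 + ‖s‖) ^ (2 * k) := step1.trans step2
            _ ≤ A ^ k * (2 ^ (2 * k) * (1 + ‖s‖ ^ (2 * k))) :=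
              mul_le_mul_of_nonneg_left step3 (by positivity)
      _ = (A ^ k * B * 2 ^ (2 * k)) * (‖f s‖ + ‖s‖ ^ (2 * k) * ‖f s‖) := by ring
  have hRnonneg : ∀ s, 0 ≤ R s := fun s => by
    rw [hR_def]; positivity
  set I : ℝ≥0∞ := ∫⁻ s : ℝ, ENNReal.ofReal (R s) with hI_def
  have hI_eq : ENNReal.ofReal (∫ s, R s) = I :=
    ofReal_integral_eq_lintegral_ofReal hRint (Filter.Eventually.of_forall hRnonneg)
  have hI_ne : I ≠ ⊤ := by rw [← hI_eq]; exact ENNReal.ofReal_ne_top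
  set gE : ℝ → ℝ≥0∞ := fun s => ENNReal.ofReal ((1 + u ^ 2 * s ^ 2) ^ (-α)) with hgE_def
  have hgE_meas : Measurable gE :=
    (ENNReal.continuous_ofReal.comp
      (hcont_base.rpow_const fun s => Or.inl (hb s).ne')).measurable
  -- the key pointwise bound
  have key : ∀ t : ℝ,
      ENNReal.ofReal (|2 * π * δ * t| ^ (2 * ℓ) * ‖∫ s in Set.Iic t, f s‖ ^ 2) ≤
        (∫⁻ s in {s : ℝ | |t| ≤ |s|}, gE s) * I := by
    intro t
    obtain ⟨A, hAmeas, hAsub, hAnorm⟩ :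
        ∃ A : Set ℝ, MeasurableSet A ∧ A ⊆ {s : ℝ | |t| ≤ |s|} ∧
          ((‖∫ s in Set.Iic t, f s‖₊ : ℝ≥0∞)) ≤ ∫⁻ s in A, (‖f s‖₊ : ℝ≥0∞) := by
      rcases le_or_gt t 0 with ht | ht
      · refine ⟨Set.Iic t, measurableSet_Iic, ?_, enorm_integral_le_lintegral_enorm _⟩
        intro s hs
        simp only [Set.mem_Iic] at hs
        simp only [Set.mem_setOf_eq]
        rw [abs_of_nonpos ht, abs_of_nonpos (hs.trans ht)]
        linarith
      · refine ⟨Set.Ioi t, measurableSet_Ioi, ?_, ?_⟩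
        · intro s hs
          simp only [Set.mem_Ioi] at hs
          simp only [Set.mem_setOf_eq]
          rw [abs_of_pos ht, abs_of_pos (ht.trans hs)]
          exact hs.le
        · have h0 : (∫ s in Set.Iic t, f s) = - ∫ s in Set.Ioi t, f s := by
            refine eq_neg_of_add_eq_zero_left ?_
            rw [intervalIntegral.integral_Iic_add_Ioi f.integrable.integrableOn f.integrable.integrableOn, hf]
          rw [h0, nnnorm_neg]
          exact enorm_integral_le_lintegral_enorm _
    -- Cauchy–Schwarz on the set A
    have hCS : (∫⁻ s in A, (‖f s‖₊ : ℝ≥0∞)) ^ 2 ≤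
        (∫⁻ s in A, ENNReal.ofReal ((1 + u ^ 2 * s ^ 2) ^ (-((ℓ:ℝ) + α)))) *
        (∫⁻ s in A, ENNReal.ofReal (R s)) := by
      have hconj : Real.HolderConjugate 2 2 := Real.HolderConjugate.two_two
      set F : ℝ → ℝ≥0∞ :=
        fun s => ENNReal.ofReal ((1 + u ^ 2 * s ^ 2) ^ (-(((ℓ:ℝ) + α) / 2))) with hF_def
      set Gn : ℝ → ℝ≥0∞ :=
        fun s => ENNReal.ofReal ((1 + u ^ 2 * s ^ 2) ^ (((ℓ:ℝ) + α) / 2) * ‖f s‖) with hGn_def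
      have hFmeas : AEMeasurable F (volume.restrict A) :=
        (ENNReal.continuous_ofReal.comp
          (hcont_base.rpow_const fun s => Or.inl (hb s).ne')).measurable.aemeasurable
      have hGmeas : AEMeasurable Gn (volume.restrict A) :=
        (ENNReal.continuous_ofReal.comp
          ((hcont_base.rpow_const fun s => Or.inl (hb s).ne').mul
            f.continuous.norm)).measurable.aemeasurable
      have h := ENNReal.lintegral_mul_le_Lp_mul_Lq (volume.restrict A) hconj hFmeas hGmeas
      have hFG : ∀ s : ℝ, (F * Gn) s = (‖f s‖₊ : ℝ≥0∞) := by
        intro s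
        show F s * Gn s = _
        rw [hF_def, hGn_def, ← ENNReal.ofReal_mul (by positivity)]
        rw [Real.rpow_neg (hb s).le, ← mul_assoc,
          inv_mul_cancel₀ (Real.rpow_pos_of_pos (hb s) _).ne', one_mul,
          ofReal_norm, enorm_eq_nnnorm]
      have hF2 : ∀ s : ℝ, F s ^ (2:ℝ) =
          ENNReal.ofReal ((1 + u ^ 2 * s ^ 2) ^ (-((ℓ:ℝ) + α))) := by
        intro s
        rw [hF_def, ENNReal.ofReal_rpow_of_nonneg (by positivity) (by norm_num),
          ← Real.rpow_mul (hb s).le,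
          show -(((ℓ:ℝ) + α) / 2) * 2 = -((ℓ:ℝ) + α) by ring]
      have hG2 : ∀ s : ℝ, Gn s ^ (2:ℝ) = ENNReal.ofReal (R s) := by
        intro s
        rw [hGn_def, ENNReal.ofReal_rpow_of_nonneg (by positivity) (by norm_num),
          Real.mul_rpow (by positivity) (norm_nonneg _),
          ← Real.rpow_mul (hb s).le,
          show (((ℓ:ℝ) + α) / 2) * 2 = (ℓ:ℝ) + α by ring,
          Real.rpow_two, hR_def]
      calc (∫⁻ s in A, (‖f s‖₊ : ℝ≥0∞)) ^ 2
          = (∫⁻ s in A, (F * Gn) s) ^ 2 := by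
            rw [lintegral_congr hFG]
        _ ≤ ((∫⁻ s in A, F s ^ (2:ℝ)) ^ (1/(2:ℝ)) *
              (∫⁻ s in A, Gn s ^ (2:ℝ)) ^ (1/(2:ℝ))) ^ 2 :=
            pow_le_pow_left₀ zero_le h 2
        _ = (∫⁻ s in A, F s ^ (2:ℝ)) * (∫⁻ s in A, Gn s ^ (2:ℝ)) := by
            rw [mul_pow, ← ENNReal.rpow_natCast ((∫⁻ s in A, F s ^ (2:ℝ)) ^ (1/(2:ℝ))) 2,
              ← ENNReal.rpow_natCast ((∫⁻ s in A, Gn s ^ (2:ℝ)) ^ (1/(2:ℝ))) 2,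
              ← ENNReal.rpow_mul, ← ENNReal.rpow_mul]
            norm_num
        _ = (∫⁻ s in A, ENNReal.ofReal ((1 + u ^ 2 * s ^ 2) ^ (-((ℓ:ℝ) + α)))) *
            (∫⁻ s in A, ENNReal.ofReal (R s)) := by
            rw [lintegral_congr hF2, lintegral_congr hG2]
    -- move the weight inside
    have hweight : ENNReal.ofReal (|2 * π * δ * t| ^ (2 * ℓ)) *
        (∫⁻ s in A, ENNReal.ofReal ((1 + u ^ 2 * s ^ 2) ^ (-((ℓ:ℝ) + α)))) ≤
        ∫⁻ s in {s : ℝ | |t| ≤ |s|}, gE s := by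
      rw [← lintegral_const_mul' _ _ ENNReal.ofReal_ne_top]
      refine le_trans (setLIntegral_mono hgE_meas fun s hs => ?_)
        (lintegral_mono_set hAsub)
      have hts : |t| ≤ |s| := hAsub hs
      rw [← ENNReal.ofReal_mul (by positivity), hgE_def]
      refine ENNReal.ofReal_le_ofReal ?_
      have habs : |2 * π * δ * t| ^ (2 * ℓ) = (u ^ 2 * t ^ 2) ^ ℓ := by
        have : 2 * π * δ * t = u * t := by rw [hu_def]
        rw [this, pow_mul, abs_mul, abs_of_pos hu, mul_pow, sq_abs]
      rw [habs]
      have hpow : (u ^ 2 * t ^ 2) ^ ℓ ≤ (1 + u ^ 2 * s ^ 2) ^ ℓ := by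
        refine pow_le_pow_left₀ (by positivity) ?_ ℓ
        have ht2 : t ^ 2 ≤ s ^ 2 := by
          rw [← sq_abs t, ← sq_abs s]
          exact pow_le_pow_left₀ (abs_nonneg t) hts 2
        nlinarith [sq_nonneg u, sq_nonneg s, hu]
      calc (u ^ 2 * t ^ 2) ^ ℓ * (1 + u ^ 2 * s ^ 2) ^ (-((ℓ:ℝ) + α))
          ≤ (1 + u ^ 2 * s ^ 2) ^ ℓ * (1 + u ^ 2 * s ^ 2) ^ (-((ℓ:ℝ) + α)) :=
            mul_le_mul_of_nonneg_right hpow (by positivity)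
        _ = (1 + u ^ 2 * s ^ 2) ^ (-α) := by
            rw [← Real.rpow_natCast (1 + u ^ 2 * s ^ 2) ℓ,
              ← Real.rpow_add (hb s)]
            norm_num
    -- combine
    calc ENNReal.ofReal (|2 * π * δ * t| ^ (2 * ℓ) * ‖∫ s in Set.Iic t, f s‖ ^ 2)
        = ENNReal.ofReal (|2 * π * δ * t| ^ (2 * ℓ)) *
            ((‖∫ s in Set.Iic t, f s‖₊ : ℝ≥0∞)) ^ 2 := by
          rw [ENNReal.ofReal_mul (by positivity), ENNReal.ofReal_pow (norm_nonneg _),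
            ofReal_norm, enorm_eq_nnnorm]
      _ ≤ ENNReal.ofReal (|2 * π * δ * t| ^ (2 * ℓ)) *
            ((∫⁻ s in A, (‖f s‖₊ : ℝ≥0∞)) ^ 2) :=
          mul_le_mul_right (pow_le_pow_left₀ zero_le hAnorm 2) _
      _ ≤ ENNReal.ofReal (|2 * π * δ * t| ^ (2 * ℓ)) *
            ((∫⁻ s in A, ENNReal.ofReal ((1 + u ^ 2 * s ^ 2) ^ (-((ℓ:ℝ) + α)))) *
             (∫⁻ s in A, ENNReal.ofReal (R s))) := mul_le_mul_right hCS _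
      _ = (ENNReal.ofReal (|2 * π * δ * t| ^ (2 * ℓ)) *
            (∫⁻ s in A, ENNReal.ofReal ((1 + u ^ 2 * s ^ 2) ^ (-((ℓ:ℝ) + α))))) *
            (∫⁻ s in A, ENNReal.ofReal (R s)) := by ring
      _ ≤ (∫⁻ s in {s : ℝ | |t| ≤ |s|}, gE s) * I := by
          refine mul_le_mul' hweight ?_
          rw [hI_def]
          exact setLIntegral_le_lintegral _ _
  -- Fubini
  have hswap : (∫⁻ t : ℝ, ∫⁻ s in {s : ℝ | |t| ≤ |s|}, gE s) =
      ∫⁻ s : ℝ, gE s * ENNReal.ofReal (2 * |s|) := by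
    have hmeasS : ∀ t : ℝ, MeasurableSet {s : ℝ | |t| ≤ |s|} := fun t =>
      measurableSet_le measurable_const measurable_id.abs
    have h1 : ∀ t : ℝ, (∫⁻ s in {s : ℝ | |t| ≤ |s|}, gE s) =
        ∫⁻ s, ({s' : ℝ | |t| ≤ |s'|}).indicator gE s := fun t =>
      (lintegral_indicator (hmeasS t) gE).symm
    simp only [h1]
    have humeas : AEMeasurable
        (Function.uncurry fun t s : ℝ => ({s' : ℝ | |t| ≤ |s'|}).indicator gE s)
        ((volume : Measure ℝ).prod (volume : Measure ℝ)) := by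
      have heq : (Function.uncurry fun t s : ℝ => ({s' : ℝ | |t| ≤ |s'|}).indicator gE s) =
          ({p : ℝ × ℝ | |p.1| ≤ |p.2|}).indicator (fun p => gE p.2) := by
        funext p
        rcases p with ⟨t, s⟩
        simp only [Function.uncurry, Set.indicator_apply, Set.mem_setOf_eq]
      rw [heq]
      exact ((hgE_meas.comp measurable_snd).indicator
        (measurableSet_le measurable_fst.abs measurable_snd.abs)).aemeasurable
    rw [lintegral_lintegral_swap humeas]
    refine lintegral_congr fun s => ?_
    have h2 : ∀ t : ℝ, ({s' : ℝ | |t| ≤ |s'|}).indicator gE s =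
        (Set.Icc (-|s|) |s|).indicator (fun _ => gE s) t := by
      intro t
      simp only [Set.indicator_apply, Set.mem_setOf_eq, Set.mem_Icc]
      rcases le_or_gt |t| |s| with h | h
      · rw [if_pos h, if_pos (abs_le.1 h)]
      · rw [if_neg (not_le.2 h), if_neg (fun hc => absurd (abs_le.2 hc) (not_le.2 h))]
    rw [lintegral_congr h2, lintegral_indicator_const measurableSet_Icc,
      Real.volume_Icc, show |s| - -|s| = 2 * |s| by ring]
  -- explicit integral
  have htotal : (∫⁻ s : ℝ, gE s * ENNReal.ofReal (2 * |s|)) =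
      ENNReal.ofReal (2 / ((α - 1) * u ^ 2)) := by
    set φ : ℝ → ℝ := fun s => 2 * |s| * (1 + u ^ 2 * s ^ 2) ^ (-α) with hφ_def
    have hφ_nonneg : ∀ s, 0 ≤ φ s := fun s => by rw [hφ_def]; positivity
    have hstep : ∀ s : ℝ, gE s * ENNReal.ofReal (2 * |s|) = ENNReal.ofReal (φ s) := by
      intro s
      rw [hgE_def, hφ_def, ← ENNReal.ofReal_mul (by positivity)]
      ring_nf
    simp only [hstep]
    -- the antiderivative on (0, ∞)
    set Fa : ℝ → ℝ := fun r => -((α - 1) * u ^ 2)⁻¹ * (1 + u ^ 2 * r ^ 2) ^ (1 - α)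
      with hFa_def
    have hFa_cont : Continuous Fa :=
      continuous_const.mul (hcont_base.rpow_const fun s => Or.inl (hb s).ne')
    have hderiv : ∀ x ∈ Set.Ioi (0:ℝ), HasDerivAt Fa (φ x) x := by
      intro x hx
      have hx0 : (0:ℝ) < x := hx
      have hbase : HasDerivAt (fun r : ℝ => 1 + u ^ 2 * r ^ 2) (u ^ 2 * (2 * x)) x := by
        simpa using ((hasDerivAt_pow 2 x).const_mul (u ^ 2)).const_add 1
      have hr : HasDerivAt (fun r : ℝ => (1 + u ^ 2 * r ^ 2) ^ (1 - α))
          (u ^ 2 * (2 * x) * (1 - α) * (1 + u ^ 2 * x ^ 2) ^ (1 - α - 1)) x :=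
        hbase.rpow_const (Or.inl (hb x).ne')
      have := hr.const_mul (-((α - 1) * u ^ 2)⁻¹)
      convert this using 1
      show 2 * |x| * (1 + u ^ 2 * x ^ 2) ^ (-α) = _
      rw [abs_of_pos hx0, show (1:ℝ) - α - 1 = -α by ring]
      field_simp
      ring
      all_goals rfl
    have htend : Filter.Tendsto Fa Filter.atTop (nhds 0) := by
      have h1 : Filter.Tendsto (fun r : ℝ => 1 + u ^ 2 * r ^ 2) Filter.atTop
          Filter.atTop := by
        apply Filter.tendsto_atTop_add_const_left
        exact (Filter.tendsto_pow_atTop two_ne_zero).const_mul_atTop (by positivity)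
      have h2 : Filter.Tendsto (fun x : ℝ => x ^ (1 - α)) Filter.atTop (nhds 0) := by
        have := tendsto_rpow_neg_atTop hα1
        simpa [neg_sub] using this
      have h3 := (h2.comp h1).const_mul (-((α - 1) * u ^ 2)⁻¹)
      rw [mul_zero] at h3
      exact h3
    have hnonneg' : ∀ x ∈ Set.Ioi (0:ℝ), 0 ≤ φ x := fun x _ => hφ_nonneg x
    have hIoi_int : IntegrableOn φ (Set.Ioi 0) :=
      integrableOn_Ioi_deriv_of_nonneg hFa_cont.continuousWithinAt hderiv hnonneg' htend
    have hIoi_val : (∫ s in Set.Ioi (0:ℝ), φ s) = ((α - 1) * u ^ 2)⁻¹ := by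
      rw [integral_Ioi_of_hasDerivAt_of_nonneg hFa_cont.continuousWithinAt hderiv
        hnonneg' htend]
      rw [hFa_def]
      norm_num
    have hlint_Ioi : (∫⁻ s in Set.Ioi (0:ℝ), ENNReal.ofReal (φ s)) =
        ENNReal.ofReal (((α - 1) * u ^ 2)⁻¹) := by
      rw [← ofReal_integral_eq_lintegral_ofReal hIoi_int
        (Filter.Eventually.of_forall hφ_nonneg), hIoi_val]
    have hlint_Iic : (∫⁻ s in Set.Iic (0:ℝ), ENNReal.ofReal (φ s)) =
        ENNReal.ofReal (((α - 1) * u ^ 2)⁻¹) := by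
      rw [← restrict_Iio_eq_restrict_Iic]
      have h := (Measure.measurePreserving_neg (volume : Measure ℝ)).setLIntegral_comp_preimage_emb
        (Homeomorph.neg ℝ).measurableEmbedding (fun s => ENNReal.ofReal (φ s)) (Set.Iio 0)
      rw [← h]
      have hset : ((Neg.neg : ℝ → ℝ) ⁻¹' Set.Iio 0) = Set.Ioi 0 := by
        ext x; simp
      rw [hset, ← hlint_Ioi]
      refine lintegral_congr fun x => ?_
      simp only [hφ_def, abs_neg, neg_sq]
    calc (∫⁻ s : ℝ, ENNReal.ofReal (φ s))
        = (∫⁻ s in Set.Iic (0:ℝ), ENNReal.ofReal (φ s)) +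
          ∫⁻ s in Set.Ioi (0:ℝ), ENNReal.ofReal (φ s) := by
          rw [← lintegral_add_compl (fun s => ENNReal.ofReal (φ s))
            (measurableSet_Iic (a := (0:ℝ))), Set.compl_Iic]
      _ = ENNReal.ofReal (2 / ((α - 1) * u ^ 2)) := by
          rw [hlint_Iic, hlint_Ioi, ← ENNReal.ofReal_add (by positivity) (by positivity)]
          congr 1
          rw [inv_eq_one_div, ← add_div]
          norm_num
  -- main lintegral bound
  have hL : (∫⁻ t : ℝ, ENNReal.ofReal
        (|2 * π * δ * t| ^ (2 * ℓ) * ‖∫ s in Set.Iic t, f s‖ ^ 2)) ≤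
      ENNReal.ofReal (2 / ((α - 1) * u ^ 2)) * I := by
    calc (∫⁻ t : ℝ, ENNReal.ofReal
        (|2 * π * δ * t| ^ (2 * ℓ) * ‖∫ s in Set.Iic t, f s‖ ^ 2))
        ≤ ∫⁻ t : ℝ, (∫⁻ s in {s : ℝ | |t| ≤ |s|}, gE s) * I := lintegral_mono key
      _ = (∫⁻ t : ℝ, ∫⁻ s in {s : ℝ | |t| ≤ |s|}, gE s) * I :=
        lintegral_mul_const' I _ hI_ne
      _ = ENNReal.ofReal (2 / ((α - 1) * u ^ 2)) * I := by rw [hswap, htotal]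
  -- convert the RHS integral
  have hRHS : (∫ s : ℝ, (1 + 4 * π ^ 2 * δ ^ 2 * s ^ 2) ^ ((ℓ : ℝ) + α) * ‖f s‖ ^ 2)
      = ∫ s, R s := by
    simp only [h4]
    rfl
  have hsqrtC : Real.sqrt (2 / ((α - 1) * u ^ 2)) =
      (Real.sqrt (2 / (α - 1)) / (2 * π)) / δ := by
    rw [← div_div, Real.sqrt_div (by positivity : (0:ℝ) ≤ 2 / (α - 1)),
      Real.sqrt_sq hu.le, hu_def, div_div]
  by_cases hΦint : Integrable
      (fun t : ℝ => |2 * π * δ * t| ^ (2 * ℓ) * ‖∫ s in Set.Iic t, f s‖ ^ 2)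
  · have hofeq : ENNReal.ofReal (∫ t : ℝ,
        |2 * π * δ * t| ^ (2 * ℓ) * ‖∫ s in Set.Iic t, f s‖ ^ 2) =
        ∫⁻ t : ℝ, ENNReal.ofReal
          (|2 * π * δ * t| ^ (2 * ℓ) * ‖∫ s in Set.Iic t, f s‖ ^ 2) :=
      ofReal_integral_eq_lintegral_ofReal hΦint
        (Filter.Eventually.of_forall fun t => by positivity)
    have hΦle : (∫ t : ℝ, |2 * π * δ * t| ^ (2 * ℓ) * ‖∫ s in Set.Iic t, f s‖ ^ 2)
        ≤ (2 / ((α - 1) * u ^ 2)) * ∫ s, R s := by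
      have h2 : ENNReal.ofReal (∫ t : ℝ,
          |2 * π * δ * t| ^ (2 * ℓ) * ‖∫ s in Set.Iic t, f s‖ ^ 2) ≤
          ENNReal.ofReal ((2 / ((α - 1) * u ^ 2)) * ∫ s, R s) := by
        rw [hofeq, ENNReal.ofReal_mul (by positivity), hI_eq]
        exact hL
      exact (ENNReal.ofReal_le_ofReal_iff
        (mul_nonneg (by positivity) (integral_nonneg hRnonneg))).1 h2
    calc Real.sqrt (∫ t : ℝ, |2 * π * δ * t| ^ (2 * ℓ) * ‖∫ s in Set.Iic t, f s‖ ^ 2)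
        ≤ Real.sqrt ((2 / ((α - 1) * u ^ 2)) * ∫ s, R s) := Real.sqrt_le_sqrt hΦle
      _ = Real.sqrt (2 / ((α - 1) * u ^ 2)) * Real.sqrt (∫ s, R s) :=
        Real.sqrt_mul (by positivity) _
      _ = (Real.sqrt (2 / (α - 1)) / (2 * π)) / δ * Real.sqrt (∫ s, R s) := by
        rw [hsqrtC]
      _ = (Real.sqrt (2 / (α - 1)) / (2 * π)) / δ * Real.sqrt
          (∫ s : ℝ, (1 + 4 * π ^ 2 * δ ^ 2 * s ^ 2) ^ ((ℓ : ℝ) + α) * ‖f s‖ ^ 2) := by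
        rw [hRHS]
  · rw [integral_undef hΦint, Real.sqrt_zero]
    have h1 : (0:ℝ) ≤ Real.sqrt (2 / (α - 1)) / (2 * π) / δ := by positivity
    exact mul_nonneg h1 (Real.sqrt_nonneg _)
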